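/- Let d(s) = exp(s·G_d) be a linear continuous dilation in ℝⁿ monotone with respect to a norm ‖·‖_{ℝⁿ}, and d̃(s) a linear continuous dilation in ℝ^k monotone with respect to a norm ‖·‖_{ℝ^k}, with canonical homogeneous norm ‖·‖_{d̃} on ℝ^k. Let f : ℝⁿ × ℝ^k → ℝⁿ be continuous with f(d(s)x, d̃(s)q) = e^{μs}·d(s)·f(x,q) for all s, x, q, μ > −1. Let φ_i (i = 1,…,p) be continuous on ℝⁿ, C¹ on ℝⁿ∖{0}, d-homogeneous of degree ν_i > 0; Ω = {x : φ_i(x) ≥ 0 for all i}. Assume solutions of ẋ = f(x, q(t)) are forward unique (at least locally) for every initial state x₀ ∉ int Ω and every essentially bounded q. If the system is Input-to-State Safe on Ω (there exist class-K functions γ̃_i with φ_i(x(t)) ≥ −γ̃_i(ess sup_{τ∈(t₀,t)}|q(τ)|) for all t ≥ t₀, x₀ ∈ Ω, essentially bounded q), then there exists r = (r₁,…,r_p) with r_i ≥ 0 such that φ_i(x(t)) + (r_i·‖q‖_{d̃,L∞(t₀,t)})^{ν_i} ≥ 0 for all t ≥ t₀, all x₀ ∈ Ω, all essentially bounded q,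 and all i, where ‖q‖_{d̃,L∞(t₀,t)} = ess sup_{τ∈(t₀,t)} ‖q(τ)‖_{d̃}. -/

import Mathlib

open Matrix Filter Topology Set

/-- The linear continuous group `d(s) = exp (s • G)` generated by `G`. -/
noncomputable def dilMat {n : ℕ} (G : Matrix (Fin n) (Fin n) ℝ) (s : ℝ) :
    Matrix (Fin n) (Fin n) ℝ := NormedSpace.exp (s • G)

/-- `N` is a norm on `ℝⁿ`. -/
def IsNorm {n : ℕ} (N : (Fin n → ℝ) → ℝ) : Prop :=
  (∀ x y : Fin n → ℝ, N (x + y) ≤ N x + N y) ∧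
  (∀ (c : ℝ) (x : Fin n → ℝ), N (c • x) = |c| * N x) ∧
  (∀ x : Fin n → ℝ, N x = 0 ↔ x = 0)

/-- `d(s) = exp (s G)` is a dilation with respect to `N`. -/
def IsDilation {n : ℕ} (G : Matrix (Fin n) (Fin n) ℝ) (N : (Fin n → ℝ) → ℝ) : Prop :=
  ∀ x : Fin n → ℝ, x ≠ 0 →
    Tendsto (fun s : ℝ => N (dilMat G s *ᵥ x)) atTop atTop ∧
    Tendsto (fun s : ℝ => N (dilMat G s *ᵥ x)) atBot (𝓝 0)

/-- The dilation is monotone with respect to `N`. -/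
def IsMonotoneDil {n : ℕ} (G : Matrix (Fin n) (Fin n) ℝ) (N : (Fin n → ℝ) → ℝ) : Prop :=
  ∀ x : Fin n → ℝ, x ≠ 0 → StrictMono fun s : ℝ => N (dilMat G s *ᵥ x)

/-- `hd` is the canonical homogeneous norm induced by `N`. -/
def IsCanonHomNorm {n : ℕ} (G : Matrix (Fin n) (Fin n) ℝ) (N : (Fin n → ℝ) → ℝ)
    (hd : (Fin n → ℝ) → ℝ) : Prop :=
  hd 0 = 0 ∧ ∀ x : Fin n → ℝ, x ≠ 0 →
    0 < hd x ∧ N (dilMat G (-Real.log (hd x)) *ᵥ x) = 1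

/-- A (essentially) bounded input. -/
def IsBddInput {k : ℕ} (q : ℝ → (Fin k → ℝ)) : Prop :=
  ∃ M : ℝ, ∀ t : ℝ, ‖q t‖ ≤ M

/-- The Euclidean norm `|x|`. -/
noncomputable def euclNorm {k : ℕ} (x : Fin k → ℝ) : ℝ :=
  Real.sqrt (∑ i, (x i) ^ 2)

/-- `sup_{τ ∈ (t₀,t)} |q(τ)|`. -/
noncomputable def supEuclOn {k : ℕ} (q : ℝ → (Fin k → ℝ)) (t₀ t : ℝ) : ℝ :=
  sSup ((fun τ => euclNorm (q τ)) '' Set.Ioo t₀ t)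

/-- `‖q‖_{d̃,L∞(t₀,t)} = sup_{τ ∈ (t₀,t)} ‖q(τ)‖_{d̃}` for a homogeneous norm `hdq`. -/
noncomputable def supHomOn {k : ℕ} (hdq : (Fin k → ℝ) → ℝ) (q : ℝ → (Fin k → ℝ))
    (t₀ t : ℝ) : ℝ :=
  sSup ((fun τ => hdq (q τ)) '' Set.Ioo t₀ t)

/-- A class `K` function. -/
def IsClassK (γ : ℝ → ℝ) : Prop :=
  ContinuousOn γ (Set.Ici 0) ∧ StrictMonoOn γ (Set.Ici 0) ∧ γ 0 = 0

theorem dilMat_add {n : ℕ} (G : Matrix (Fin n) (Fin n) ℝ) (a b : ℝ) :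
    dilMat G (a + b) = dilMat G a * dilMat G b := by
  unfold dilMat
  rw [add_smul]
  exact Matrix.exp_add_of_commute _ _ ((Commute.refl G).smul_left a |>.smul_right b)
theorem dilMat_zero {n : ℕ} (G : Matrix (Fin n) (Fin n) ℝ) : dilMat G 0 = 1 := by
  unfold dilMat; rw [zero_smul]; exact NormedSpace.exp_zero
theorem dilMat_continuous {n : ℕ} (G : Matrix (Fin n) (Fin n) ℝ) :
    Continuous (dilMat G) := by
  letI : SeminormedRing (Matrix (Fin n) (Fin n) ℝ) := Matrix.linftyOpSemiNormedRing
  letI : NormedRing (Matrix (Fin n) (Fin n) ℝ) := Matrix.linftyOpNormedRing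
  letI : NormedAlgebra ℝ (Matrix (Fin n) (Fin n) ℝ) := Matrix.linftyOpNormedAlgebra
  letI : NormedAlgebra ℚ (Matrix (Fin n) (Fin n) ℝ) := NormedAlgebra.mk fun q A => by
    rw [← algebraMap_smul ℝ q A]; exact (norm_smul_le _ _).trans_eq (by simp)
  exact NormedSpace.exp_continuous.comp (continuous_id.smul continuous_const)
theorem dilMat_mulVec_mulVec {n : ℕ} (G : Matrix (Fin n) (Fin n) ℝ) (a b : ℝ) (x : Fin n → ℝ) :
    dilMat G a *ᵥ (dilMat G b *ᵥ x) = dilMat G (a + b) *ᵥ x := by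
  rw [dilMat_add, ← mulVec_mulVec]
theorem dilMat_mulVec_ne_zero {n : ℕ} (G : Matrix (Fin n) (Fin n) ℝ) (s : ℝ) {x : Fin n → ℝ}
    (hx : x ≠ 0) : dilMat G s *ᵥ x ≠ 0 := by
  intro h
  apply hx
  have := congrArg (fun v => dilMat G (-s) *ᵥ v) h
  simp only [dilMat_mulVec_mulVec, Matrix.mulVec_zero] at this
  rw [neg_add_cancel, dilMat_zero, Matrix.one_mulVec] at this
  exact this
theorem canonHomNorm_dil {n : ℕ} {G : Matrix (Fin n) (Fin n) ℝ} {N : (Fin n → ℝ) → ℝ}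
    {hd : (Fin n → ℝ) → ℝ} (hmono : IsMonotoneDil G N) (h : IsCanonHomNorm G N hd)
    (s : ℝ) (x : Fin n → ℝ) :
    hd (dilMat G s *ᵥ x) = Real.exp s * hd x := by
  rcases eq_or_ne x 0 with rfl | hx
  · simp [Matrix.mulVec_zero, h.1]
  have hx' : dilMat G s *ᵥ x ≠ 0 := dilMat_mulVec_ne_zero G s hx
  obtain ⟨hpos, hunit⟩ := h.2 x hx
  obtain ⟨hpos', hunit'⟩ := h.2 _ hx'
  -- both -log (hd (d s x)) + s and -log(hd x) give N (dil (·) x) = 1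
  have h1 : N (dilMat G (-Real.log (hd (dilMat G s *ᵥ x)) + s) *ᵥ x) = 1 := by
    rw [← dilMat_mulVec_mulVec]; exact hunit'
  have h2 : N (dilMat G (-Real.log (hd x)) *ᵥ x) = 1 := hunit
  have := (hmono x hx).injective (h1.trans h2.symm)
  have hlog : Real.log (hd (dilMat G s *ᵥ x)) = s + Real.log (hd x) := by linarith
  have := congrArg Real.exp hlog
  rwa [Real.exp_log hpos', Real.exp_add, Real.exp_log hpos] at this
theorem canonHomNorm_nonneg {n : ℕ} {G : Matrix (Fin n) (Fin n) ℝ} {N : (Fin n → ℝ) → ℝ}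
    {hd : (Fin n → ℝ) → ℝ} (h : IsCanonHomNorm G N hd) (x : Fin n → ℝ) : 0 ≤ hd x := by
  rcases eq_or_ne x 0 with rfl | hx
  · simp [h.1]
  · exact (h.2 x hx).1.le
theorem IsNorm.zero {n : ℕ} {N : (Fin n → ℝ) → ℝ} (h : IsNorm N) : N 0 = 0 :=
  (h.2.2 0).mpr rfl
theorem IsNorm.nonneg {n : ℕ} {N : (Fin n → ℝ) → ℝ} (h : IsNorm N) (x : Fin n → ℝ) :
    0 ≤ N x := by
  have h0 : N 0 = 0 := h.zero
  have := h.1 x (-x)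
  have hneg : N (-x) = N x := by
    have := h.2.1 (-1) x
    simpa using this
  rw [add_neg_cancel, h0, hneg] at this
  linarith
theorem IsNorm.pos {n : ℕ} {N : (Fin n → ℝ) → ℝ} (h : IsNorm N) {x : Fin n → ℝ} (hx : x ≠ 0) :
    0 < N x :=
  lt_of_le_of_ne (h.nonneg x) (fun e => hx ((h.2.2 x).mp e.symm))
theorem IsNorm.le_const_norm {n : ℕ} {N : (Fin n → ℝ) → ℝ} (h : IsNorm N) :
    ∃ K : ℝ, 0 ≤ K ∧ ∀ x : Fin n → ℝ, N x ≤ K * ‖x‖ := by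
  refine ⟨∑ i, N (Pi.single i 1 : Fin n → ℝ), Finset.sum_nonneg fun i _ => h.nonneg _, fun x => ?_⟩
  have hx : x = ∑ i, x i • (Pi.single i 1 : Fin n → ℝ) := by
    funext j
    simp [Finset.sum_apply, Pi.single_apply]
  calc N x = N (∑ i, x i • (Pi.single i 1 : Fin n → ℝ)) := by rw [← hx]
    _ ≤ ∑ i, N (x i • (Pi.single i 1 : Fin n → ℝ)) :=
        Finset.le_sum_of_subadditive N h.zero.le h.1 _ _
    _ = ∑ i, |x i| * N (Pi.single i 1 : Fin n → ℝ) := by simp_rw [h.2.1]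
    _ ≤ ∑ i, ‖x‖ * N (Pi.single i 1 : Fin n → ℝ) := by
        refine Finset.sum_le_sum fun i _ => ?_
        exact mul_le_mul_of_nonneg_right (by
          simpa using norm_le_pi_norm x i) (h.nonneg _)
    _ = (∑ i, N (Pi.single i 1 : Fin n → ℝ)) * ‖x‖ := by
        rw [Finset.sum_mul]
        exact Finset.sum_congr rfl fun i _ => mul_comm _ _
theorem IsNorm.continuous {n : ℕ} {N : (Fin n → ℝ) → ℝ} (h : IsNorm N) : Continuous N := by
  obtain ⟨K, hK0, hK⟩ := h.le_const_norm
  refine (LipschitzWith.of_dist_le_mul (K := K.toNNReal) (f := N) fun x y => ?_).continuous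
  have h1 : N x - N y ≤ N (x - y) := by
    have := h.1 (x - y) y; rw [sub_add_cancel] at this; linarith
  have h2 : N y - N x ≤ N (x - y) := by
    have ht := h.1 (y - x) x
    rw [sub_add_cancel] at ht
    have hneg : N (y - x) = N (x - y) := by
      have h3 := h.2.1 (-1) (x - y)
      rw [neg_one_smul, abs_neg, abs_one, one_mul, neg_sub] at h3
      exact h3
    linarith
  have : dist (N x) (N y) ≤ N (x - y) := by
    rw [Real.dist_eq, abs_sub_le_iff]; exact ⟨h1, h2⟩
  refine this.trans ((hK _).trans ?_)
  rw [Real.coe_toNNReal K hK0, dist_eq_norm]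
theorem IsNorm.const_norm_le {n : ℕ} {N : (Fin n → ℝ) → ℝ} (h : IsNorm N) :
    ∃ m : ℝ, 0 < m ∧ ∀ x : Fin n → ℝ, m * ‖x‖ ≤ N x := by
  rcases isEmpty_or_nonempty (Fin n) with he | hne
  · exact ⟨1, one_pos, fun x => by
      have : x = 0 := Subsingleton.elim x 0
      simp [this, h.zero]⟩
  have hcs : IsCompact (Metric.sphere (0 : Fin n → ℝ) 1) := isCompact_sphere 0 1
  have hsne : (Metric.sphere (0 : Fin n → ℝ) 1).Nonempty := by
    obtain ⟨y, hy⟩ := NormedSpace.sphere_nonempty (E := Fin n → ℝ) (x := 0) (r := 1) |>.mpr zero_le_one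
    exact ⟨y, hy⟩
  obtain ⟨u, hu, humin⟩ := hcs.exists_isMinOn hsne h.continuous.continuousOn
  have hu1 : ‖u‖ = 1 := by simpa using hu
  have hune : u ≠ 0 := by intro e; rw [e] at hu1; simp at hu1
  refine ⟨N u, h.pos hune, fun x => ?_⟩
  rcases eq_or_ne x 0 with rfl | hx
  · simp [h.zero]
  have hxn : ‖x‖ ≠ 0 := norm_ne_zero_iff.mpr hx
  have hmem : (‖x‖⁻¹ • x) ∈ Metric.sphere (0 : Fin n → ℝ) 1 := by
    simp [norm_smul, abs_of_nonneg (inv_nonneg.mpr (norm_nonneg x)), inv_mul_cancel₀ hxn]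
  have hle : N u ≤ N (‖x‖⁻¹ • x) := humin hmem
  have hNs : N (‖x‖⁻¹ • x) = ‖x‖⁻¹ * N x := by
    rw [h.2.1, abs_of_nonneg (inv_nonneg.mpr (norm_nonneg x))]
  rw [hNs] at hle
  have this := hle
  have hpos : 0 < ‖x‖ := lt_of_le_of_ne (norm_nonneg x) (Ne.symm hxn)
  calc N u * ‖x‖ ≤ (‖x‖⁻¹ * N x) * ‖x‖ := by
        exact mul_le_mul_of_nonneg_right this hpos.le
    _ = N x := by field_simp
theorem dil_apply_continuous {n : ℕ} (G : Matrix (Fin n) (Fin n) ℝ) :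
    Continuous fun p : ℝ × (Fin n → ℝ) => dilMat G p.1 *ᵥ p.2 :=
  Continuous.matrix_mulVec ((dilMat_continuous G).comp continuous_fst) continuous_snd
theorem dil_uniform_large {n : ℕ} {G : Matrix (Fin n) (Fin n) ℝ} {N : (Fin n → ℝ) → ℝ}
    (hN : IsNorm N) (hdil : IsDilation G N) (hmono : IsMonotoneDil G N) (M : ℝ) :
    ∃ s0 : ℝ, ∀ u : Fin n → ℝ, N u = 1 → M < N (dilMat G s0 *ᵥ u) := by
  classical
  set S : Set (Fin n → ℝ) := {u | N u = 1} with hS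
  rcases S.eq_empty_or_nonempty with hSe | hSne
  · exact ⟨0, fun u hu => absurd (show u ∈ S from hu) (by rw [hSe]; exact notMem_empty u)⟩
  -- S is compact
  have hclosed : IsClosed S := isClosed_eq hN.continuous continuous_const
  obtain ⟨m, hm, hmle⟩ := hN.const_norm_le
  have hbdd : Bornology.IsBounded S := by
    rw [isBounded_iff_forall_norm_le]
    refine ⟨m⁻¹, fun u hu => ?_⟩
    have := hmle u
    rw [show N u = 1 from hu] at this
    rw [← one_div, le_div_iff₀ hm, mul_comm]
    exact this
  have hScomp : IsCompact S := Metric.isCompact_of_isClosed_isBounded hclosed hbdd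
  -- for each u choose a time where the norm exceeds M
  have hchoice : ∀ u : Fin n → ℝ, N u = 1 → ∃ s : ℝ, M < N (dilMat G s *ᵥ u) := by
    intro u hu
    have hune : u ≠ 0 := fun e => by simp [e, hN.zero] at hu
    have := (hdil u hune).1.eventually_gt_atTop M
    exact this.exists
  choose! σ hσ using hchoice
  set U : (Fin n → ℝ) → Set (Fin n → ℝ) := fun u => {v | M < N (dilMat G (σ u) *ᵥ v)} with hU
  have hUopen : ∀ u, IsOpen (U u) := by
    intro u
    have : Continuous fun v : Fin n → ℝ => N (dilMat G (σ u) *ᵥ v) :=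
      hN.continuous.comp (Continuous.matrix_mulVec continuous_const continuous_id)
    exact isOpen_lt continuous_const this
  have hcover : S ⊆ ⋃ u ∈ S, U u := by
    intro u hu
    exact mem_biUnion hu (hσ u hu)
  obtain ⟨t, hts⟩ := hScomp.elim_finite_subcover_image (fun u _ => hUopen u) hcover
  obtain ⟨tsub, htfin, htcover⟩ := hts
  rcases htfin.toFinset.eq_empty_or_nonempty with hte | htne
  · exfalso
    obtain ⟨u, hu⟩ := hSne
    have := htcover hu
    simp only [mem_iUnion] at this
    obtain ⟨v, hv, _⟩ := this
    have : v ∈ htfin.toFinset := htfin.mem_toFinset.mpr hv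
    rw [hte] at this
    exact absurd this (Finset.notMem_empty v)
  refine ⟨htfin.toFinset.sup' htne σ, fun u hu => ?_⟩
  have := htcover hu
  simp only [mem_iUnion] at this
  obtain ⟨v, hv, huv⟩ := this
  have hle : σ v ≤ htfin.toFinset.sup' htne σ :=
    Finset.le_sup' σ (htfin.mem_toFinset.mpr hv)
  have hune : u ≠ 0 := fun e => by simp [e, hN.zero] at hu
  have hmonoU := (hmono u hune).monotone hle
  exact lt_of_lt_of_le huv hmonoU
theorem canonHomNorm_rep {n : ℕ} {G : Matrix (Fin n) (Fin n) ℝ} {N : (Fin n → ℝ) → ℝ}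
    {hd : (Fin n → ℝ) → ℝ} (h : IsCanonHomNorm G N hd) {x : Fin n → ℝ} (hx : x ≠ 0) :
    ∃ u : Fin n → ℝ, N u = 1 ∧ x = dilMat G (Real.log (hd x)) *ᵥ u := by
  refine ⟨dilMat G (-Real.log (hd x)) *ᵥ x, (h.2 x hx).2, ?_⟩
  rw [dilMat_mulVec_mulVec, add_neg_cancel, dilMat_zero, Matrix.one_mulVec]
theorem canonHomNorm_bdd {n : ℕ} {G : Matrix (Fin n) (Fin n) ℝ} {N : (Fin n → ℝ) → ℝ}
    {hd : (Fin n → ℝ) → ℝ} (hN : IsNorm N) (hdil : IsDilation G N) (hmono : IsMonotoneDil G N)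
    (h : IsCanonHomNorm G N hd) (M : ℝ) :
    ∃ B : ℝ, 0 < B ∧ ∀ x : Fin n → ℝ, N x ≤ M → hd x ≤ B := by
  obtain ⟨s0, hs0⟩ := dil_uniform_large hN hdil hmono M
  refine ⟨Real.exp s0, Real.exp_pos s0, fun x hx => ?_⟩
  rcases eq_or_ne x 0 with rfl | hxne
  · rw [h.1]; exact (Real.exp_pos s0).le
  obtain ⟨u, hu1, hrep⟩ := canonHomNorm_rep h hxne
  by_contra hcon
  push_neg at hcon
  have hune : u ≠ 0 := fun e => by simp [e, hN.zero] at hu1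
  have hlog : s0 < Real.log (hd x) := by
    have := Real.log_lt_log (Real.exp_pos s0) hcon
    rwa [Real.log_exp] at this
  have hstrict : N (dilMat G s0 *ᵥ u) < N (dilMat G (Real.log (hd x)) *ᵥ u) :=
    (hmono u hune) hlog
  rw [← hrep] at hstrict
  exact absurd (lt_of_lt_of_le (lt_trans (hs0 u hu1) hstrict) hx) (lt_irrefl M)
theorem canonHomNorm_le_one {n : ℕ} {G : Matrix (Fin n) (Fin n) ℝ} {N : (Fin n → ℝ) → ℝ}
    {hd : (Fin n → ℝ) → ℝ} (hN : IsNorm N) (hmono : IsMonotoneDil G N)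
    (h : IsCanonHomNorm G N hd) {x : Fin n → ℝ} (hx : hd x ≤ 1) : N x ≤ 1 := by
  rcases eq_or_ne x 0 with rfl | hxne
  · rw [hN.zero]; exact zero_le_one
  obtain ⟨u, hu1, hrep⟩ := canonHomNorm_rep h hxne
  have hune : u ≠ 0 := fun e => by simp [e, hN.zero] at hu1
  have hlog : Real.log (hd x) ≤ 0 := Real.log_nonpos (canonHomNorm_nonneg h x) hx
  have hmle : N (dilMat G (Real.log (hd x)) *ᵥ u) ≤ N (dilMat G 0 *ᵥ u) :=
    (hmono u hune).monotone hlog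
  calc N x = N (dilMat G (Real.log (hd x)) *ᵥ u) := by rw [← hrep]
    _ ≤ N (dilMat G 0 *ᵥ u) := hmle
    _ = 1 := by rw [dilMat_zero, Matrix.one_mulVec, hu1]
theorem euclNorm_nonneg {k : ℕ} (x : Fin k → ℝ) : 0 ≤ euclNorm x := Real.sqrt_nonneg _
theorem euclNorm_zero {k : ℕ} : euclNorm (0 : Fin k → ℝ) = 0 := by
  simp [euclNorm]
theorem euclNorm_le {k : ℕ} (x : Fin k → ℝ) : euclNorm x ≤ Real.sqrt k * ‖x‖ := by
  rw [← Real.sqrt_sq (norm_nonneg x), ← Real.sqrt_mul (Nat.cast_nonneg k)]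
  apply Real.sqrt_le_sqrt
  calc ∑ i, (x i)^2 ≤ ∑ _i : Fin k, ‖x‖^2 := by
        refine Finset.sum_le_sum fun i _ => ?_
        rw [← sq_abs]
        exact pow_le_pow_left₀ (abs_nonneg _) (by simpa using norm_le_pi_norm x i) 2
    _ = (k : ℝ) * ‖x‖^2 := by simp [Finset.sum_const, nsmul_eq_mul]
theorem mulVec_norm_bound {k : ℕ} (A : Matrix (Fin k) (Fin k) ℝ) :
    ∃ C : ℝ, 0 ≤ C ∧ ∀ v : Fin k → ℝ, ‖A *ᵥ v‖ ≤ C * ‖v‖ := by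
  let L : (Fin k → ℝ) →L[ℝ] (Fin k → ℝ) := LinearMap.toContinuousLinearMap (Matrix.mulVecLin A)
  exact ⟨‖L‖, norm_nonneg L, fun v => L.le_opNorm v⟩

/-- necessary condition of ISSf for homogeneous systems: if the system is
Input-to-State Safe on `Ω = {x : φᵢ(x) ≥ 0}`, then there exists `r ≥ 0` such that
`φᵢ(x(t)) + (rᵢ·‖q‖_{d̃,L∞(t₀,t)})^{νᵢ} ≥ 0` along all solutions starting in `Ω`. -/
theorem stmt13 {n k : ℕ} (p : ℕ)
    (G : Matrix (Fin n) (Fin n) ℝ) (Gt : Matrix (Fin k) (Fin k) ℝ)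
    (Nn : (Fin n → ℝ) → ℝ) (Nk : (Fin k → ℝ) → ℝ)
    (hNn : IsNorm Nn) (hNk : IsNorm Nk)
    (hdilG : IsDilation G Nn) (hmonoG : IsMonotoneDil G Nn)
    (hdilGt : IsDilation Gt Nk) (hmonoGt : IsMonotoneDil Gt Nk)
    (hdq : (Fin k → ℝ) → ℝ) (hhdq : IsCanonHomNorm Gt Nk hdq)
    (f : (Fin n → ℝ) → (Fin k → ℝ) → (Fin n → ℝ)) (μ : ℝ) (hμ : -1 < μ)
    (hf : Continuous fun pr : (Fin n → ℝ) × (Fin k → ℝ) => f pr.1 pr.2)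
    (hfhom : ∀ (s : ℝ) (x : Fin n → ℝ) (q : Fin k → ℝ),
      f (dilMat G s *ᵥ x) (dilMat Gt s *ᵥ q) = Real.exp (μ * s) • (dilMat G s *ᵥ f x q))
    (φ : Fin p → (Fin n → ℝ) → ℝ) (ν : Fin p → ℝ) (hν : ∀ i, 0 < ν i)
    (hφcont : ∀ i, Continuous (φ i))
    (hφC1 : ∀ i, ContDiffOn ℝ 1 (φ i) {x : Fin n → ℝ | x ≠ 0})
    (hφhom : ∀ i, ∀ (s : ℝ) (x : Fin n → ℝ),
      φ i (dilMat G s *ᵥ x) = Real.exp (ν i * s) * φ i x)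
    (Ω : Set (Fin n → ℝ)) (hΩ : Ω = {x : Fin n → ℝ | ∀ i, 0 ≤ φ i x})
    -- Assumption 4: forward (local) uniqueness from any `x₀ ∉ int Ω`
    (huniq : ∀ q : ℝ → (Fin k → ℝ), IsBddInput q → ∀ t₀ : ℝ,
      ∀ x y : ℝ → (Fin n → ℝ),
        (∀ t : ℝ, t₀ ≤ t → HasDerivAt x (f (x t) (q t)) t) →
        (∀ t : ℝ, t₀ ≤ t → HasDerivAt y (f (y t) (q t)) t) →
        x t₀ = y t₀ → x t₀ ∉ interior Ω →
        ∃ ε : ℝ, 0 < ε ∧ ∀ t ∈ Set.Icc t₀ (t₀ + ε), x t = y t)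
    -- the system is Input-to-State Safe on Ω
    (hISSf : ∃ γ : Fin p → ℝ → ℝ, (∀ i, IsClassK (γ i)) ∧
      ∀ q : ℝ → (Fin k → ℝ), IsBddInput q → ∀ t₀ : ℝ, ∀ x : ℝ → (Fin n → ℝ),
        (∀ t : ℝ, t₀ ≤ t → HasDerivAt x (f (x t) (q t)) t) → x t₀ ∈ Ω →
        ∀ t : ℝ, t₀ ≤ t → ∀ i, -(γ i (supEuclOn q t₀ t)) ≤ φ i (x t)) :
    ∃ r : Fin p → ℝ, (∀ i, 0 ≤ r i) ∧
      ∀ q : ℝ → (Fin k → ℝ), IsBddInput q → ∀ t₀ : ℝ, ∀ x : ℝ → (Fin n → ℝ),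
        (∀ t : ℝ, t₀ ≤ t → HasDerivAt x (f (x t) (q t)) t) → x t₀ ∈ Ω →
        ∀ t : ℝ, t₀ ≤ t → ∀ i,
          0 ≤ φ i (x t) + (r i * supHomOn hdq q t₀ t) ^ ν i := by
  classical
  obtain ⟨K, hK0, hKle⟩ := hNk.le_const_norm
  obtain ⟨m, hm, hmle⟩ := hNk.const_norm_le
  set C : ℝ := Real.sqrt k / m with hCdef
  have hC0 : 0 ≤ C := div_nonneg (Real.sqrt_nonneg _) hm.le
  obtain ⟨γ, hγK, hγ⟩ := hISSf
  have hγ0 : ∀ i, γ i 0 = 0 := fun i => (hγK i).2.2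
  have hγmono : ∀ i, MonotoneOn (γ i) (Set.Ici 0) := fun i => (hγK i).2.1.monotoneOn
  have hγC0 : ∀ i, 0 ≤ γ i C := fun i => by
    have := hγmono i (mem_Ici.mpr le_rfl) (mem_Ici.mpr hC0) hC0
    rwa [hγ0 i] at this
  have heucl_bound : ∀ y : Fin k → ℝ, hdq y ≤ 1 → euclNorm y ≤ C := by
    intro y hy
    have h1 : Nk y ≤ 1 := canonHomNorm_le_one hNk hmonoGt hhdq hy
    have h2 : ‖y‖ ≤ 1 / m := by
      rw [le_div_iff₀ hm, mul_comm]; exact (hmle y).trans h1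
    calc euclNorm y ≤ Real.sqrt k * ‖y‖ := euclNorm_le y
      _ ≤ Real.sqrt k * (1 / m) :=
          mul_le_mul_of_nonneg_left h2 (Real.sqrt_nonneg _)
      _ = C := by rw [hCdef]; ring
  refine ⟨fun i => (γ i C) ^ (ν i)⁻¹, fun i => Real.rpow_nonneg (hγC0 i) _, ?_⟩
  intro q hq t₀ x hx hx0 t ht i
  obtain ⟨M, hM⟩ := hq
  obtain ⟨B, hB0, hB⟩ := canonHomNorm_bdd hNk hdilGt hmonoGt hhdq (K * M)
  have hqB : ∀ τ, hdq (q τ) ≤ B := fun τ =>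
    hB _ ((hKle _).trans (mul_le_mul_of_nonneg_left (hM τ) hK0))
  set S := supHomOn hdq q t₀ t with hSdef
  have hAbdd : BddAbove ((fun τ => hdq (q τ)) '' Set.Ioo t₀ t) := by
    refine ⟨B, ?_⟩
    rintro a ⟨τ, _, rfl⟩
    exact hqB τ
  have hmemS : ∀ τ ∈ Set.Ioo t₀ t, hdq (q τ) ≤ S :=
    fun τ hτ => le_csSup hAbdd (mem_image_of_mem _ hτ)
  have hS0 : 0 ≤ S := by
    rcases (Set.Ioo t₀ t).eq_empty_or_nonempty with he | ⟨τ, hτ⟩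
    · rw [hSdef]; unfold supHomOn; rw [he, image_empty, Real.sSup_empty]
    · exact le_trans (canonHomNorm_nonneg hhdq (q τ)) (hmemS τ hτ)
  rcases eq_or_lt_of_le hS0 with hS | hS
  · -- zero input on the interval
    have hq0 : ∀ τ ∈ Set.Ioo t₀ t, q τ = 0 := by
      intro τ hτ
      by_contra hne
      have := (hhdq.2 (q τ) hne).1
      have := hmemS τ hτ
      linarith [hS.symm ▸ hmemS τ hτ, (hhdq.2 (q τ) hne).1]
    have hsup0 : supEuclOn q t₀ t = 0 := by
      unfold supEuclOn
      rcases (Set.Ioo t₀ t).eq_empty_or_nonempty with he | ⟨τ, hτ⟩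
      · rw [he, image_empty, Real.sSup_empty]
      · have himg : (fun τ => euclNorm (q τ)) '' Set.Ioo t₀ t = {0} := by
          apply Set.Subset.antisymm
          · rintro a ⟨τ', hτ', rfl⟩
            simp [hq0 τ' hτ', euclNorm_zero]
          · rintro a ha
            rw [Set.mem_singleton_iff] at ha
            exact ⟨τ, hτ, by simp [hq0 τ hτ, euclNorm_zero, ha]⟩
        rw [himg, csSup_singleton]
    have hφge := hγ q ⟨M, hM⟩ t₀ x hx hx0 t ht i
    rw [hsup0, hγ0 i] at hφge
    have hz : ((γ i C) ^ (ν i)⁻¹ * S) ^ ν i = 0 := by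
      rw [← hS, mul_zero, Real.zero_rpow (ne_of_gt (hν i))]
    rw [hz, add_zero]
    linarith
  · -- positive homogeneous sup: scale the trajectory
    set s : ℝ := -Real.log S with hsdef
    set c : ℝ := Real.exp (μ * s) with hcdef
    have hc : 0 < c := Real.exp_pos _
    set σ : ℝ → ℝ := fun τ' => t₀ + c * (τ' - t₀) with hσdef
    set y : ℝ → (Fin n → ℝ) := fun τ' => dilMat G s *ᵥ x (σ τ') with hydef
    set qs : ℝ → (Fin k → ℝ) := fun τ' => dilMat Gt s *ᵥ q (σ τ') with hqsdef
    obtain ⟨CA, hCA0, hCAle⟩ := mulVec_norm_bound (dilMat Gt s)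
    have hqsbdd : IsBddInput qs :=
      ⟨CA * M, fun τ => (hCAle _).trans (mul_le_mul_of_nonneg_left (hM _) hCA0)⟩
    have hσt₀ : σ t₀ = t₀ := by simp [hσdef]
    have hσmono : ∀ τ', t₀ ≤ τ' → t₀ ≤ σ τ' := by
      intro τ' hτ'
      rw [hσdef]
      have : 0 ≤ c * (τ' - t₀) := mul_nonneg hc.le (by linarith)
      dsimp only
      linarith
    have hyderiv : ∀ τ' : ℝ, t₀ ≤ τ' → HasDerivAt y (f (y τ') (qs τ')) τ' := by
      intro τ' hτ'
      have hσd : HasDerivAt σ c τ' := by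
        have h1 : HasDerivAt (fun τ'' : ℝ => τ'' - t₀) 1 τ' := (hasDerivAt_id τ').sub_const t₀
        have h2 := (h1.const_mul c).const_add t₀
        rw [hσdef]; simpa using h2
      have hxσ := hx (σ τ') (hσmono τ' hτ')
      have hcomp : HasDerivAt (fun τ'' => x (σ τ'')) (c • f (x (σ τ')) (q (σ τ'))) τ' :=
        hxσ.scomp τ' hσd
      set L : (Fin n → ℝ) →L[ℝ] (Fin n → ℝ) :=
        LinearMap.toContinuousLinearMap (Matrix.mulVecLin (dilMat G s)) with hLdef
      have hLy : HasDerivAt (fun τ'' => L (x (σ τ''))) (L (c • f (x (σ τ')) (q (σ τ')))) τ' :=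
        L.hasFDerivAt.comp_hasDerivAt τ' hcomp
      have heq : L (c • f (x (σ τ')) (q (σ τ'))) = f (y τ') (qs τ') := by
        show dilMat G s *ᵥ (c • f (x (σ τ')) (q (σ τ'))) = f (y τ') (qs τ')
        rw [Matrix.mulVec_smul]
        show c • (dilMat G s *ᵥ f (x (σ τ')) (q (σ τ'))) =
          f (dilMat G s *ᵥ x (σ τ')) (dilMat Gt s *ᵥ q (σ τ'))
        rw [hfhom s (x (σ τ')) (q (σ τ'))]
      rw [heq] at hLy
      exact hLy
    have hy0 : y t₀ ∈ Ω := by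
      rw [hΩ]
      intro j
      show 0 ≤ φ j (dilMat G s *ᵥ x (σ t₀))
      rw [hσt₀, hφhom j s (x t₀)]
      exact mul_nonneg (Real.exp_pos _).le ((hΩ ▸ hx0) j)
    set t' : ℝ := t₀ + (t - t₀) / c with ht'def
    have ht' : t₀ ≤ t' := by
      rw [ht'def]
      have : 0 ≤ (t - t₀) / c := div_nonneg (by linarith) hc.le
      linarith
    have hσt' : σ t' = t := by
      rw [hσdef, ht'def]
      field_simp
      ring
    have hφge := hγ qs hqsbdd t₀ y hyderiv hy0 t' ht' i
    -- bound the euclidean sup of the scaled input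
    have hqs_le : ∀ τ'' ∈ Set.Ioo t₀ t', euclNorm (qs τ'') ≤ C := by
      intro τ'' hτ''
      have hσmem : σ τ'' ∈ Set.Ioo t₀ t := by
        constructor
        · rw [hσdef]
          dsimp only
          have : 0 < c * (τ'' - t₀) := mul_pos hc (by linarith [hτ''.1])
          linarith
        · have : σ τ'' < σ t' := by
            rw [hσdef]
            dsimp only
            have : c * (τ'' - t₀) < c * (t' - t₀) := by
              apply mul_lt_mul_of_pos_left _ hc
              linarith [hτ''.2]
            linarith
          rwa [hσt'] at this
      have h1 : hdq (qs τ'') = Real.exp s * hdq (q (σ τ'')) :=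
        canonHomNorm_dil hmonoGt hhdq s (q (σ τ''))
      have h2 : hdq (q (σ τ'')) ≤ S := hmemS _ hσmem
      have h3 : Real.exp s = S⁻¹ := by
        rw [hsdef, Real.exp_neg, Real.exp_log hS]
      have h4 : hdq (qs τ'') ≤ 1 := by
        rw [h1, h3]
        calc S⁻¹ * hdq (q (σ τ'')) ≤ S⁻¹ * S :=
              mul_le_mul_of_nonneg_left h2 (inv_nonneg.mpr hS0)
          _ = 1 := inv_mul_cancel₀ (ne_of_gt hS)
      exact heucl_bound _ h4
    have hE_le : supEuclOn qs t₀ t' ≤ C := by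
      unfold supEuclOn
      rcases (Set.Ioo t₀ t').eq_empty_or_nonempty with he | hne
      · rw [he, image_empty, Real.sSup_empty]; exact hC0
      · apply csSup_le (hne.image _)
        rintro a ⟨τ'', hτ'', rfl⟩
        exact hqs_le τ'' hτ''
    have hE0 : 0 ≤ supEuclOn qs t₀ t' := by
      unfold supEuclOn
      rcases (Set.Ioo t₀ t').eq_empty_or_nonempty with he | ⟨τ'', hτ''⟩
      · rw [he, image_empty, Real.sSup_empty]
      · refine le_trans (euclNorm_nonneg (qs τ'')) (le_csSup ⟨C, ?_⟩ (mem_image_of_mem _ hτ''))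
        rintro a ⟨τ₃, hτ₃, rfl⟩
        exact hqs_le τ₃ hτ₃
    have hγE : γ i (supEuclOn qs t₀ t') ≤ γ i C :=
      hγmono i (mem_Ici.mpr hE0) (mem_Ici.mpr hC0) hE_le
    -- rewrite φ of the scaled state
    have hyt' : φ i (y t') = Real.exp (ν i * s) * φ i (x t) := by
      show φ i (dilMat G s *ᵥ x (σ t')) = _
      rw [hσt', hφhom i s (x t)]
    rw [hyt'] at hφge
    have hkey : -(γ i C) ≤ Real.exp (ν i * s) * φ i (x t) := by
      calc -(γ i C) ≤ -(γ i (supEuclOn qs t₀ t')) := neg_le_neg hγE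
        _ ≤ Real.exp (ν i * s) * φ i (x t) := hφge
    -- convert to the required inequality
    have hSpow : Real.exp (-(ν i * s)) = S ^ ν i := by
      rw [Real.rpow_def_of_pos hS]
      congr 1
      rw [hsdef]
      ring
    have hmain : -(S ^ ν i * γ i C) ≤ φ i (x t) := by
      have h5 := mul_le_mul_of_nonneg_left hkey (Real.exp_pos (-(ν i * s))).le
      rw [← mul_assoc, ← Real.exp_add, neg_add_cancel, Real.exp_zero, one_mul] at h5
      calc -(S ^ ν i * γ i C) = Real.exp (-(ν i * s)) * -(γ i C) := by
            rw [hSpow]; ring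
        _ ≤ φ i (x t) := h5
    have hrS : ((γ i C) ^ (ν i)⁻¹ * S) ^ ν i = γ i C * S ^ ν i := by
      rw [Real.mul_rpow (Real.rpow_nonneg (hγC0 i) _) hS0,
        ← Real.rpow_mul (hγC0 i), inv_mul_cancel₀ (ne_of_gt (hν i)), Real.rpow_one]
    rw [hrS]
    linarith [hmain]
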